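/- Let G be a finite simple graph and u a vertex of degree 4 with neighbours a, b, c, d. If the graph G - {ua, ub, uc, ud} (G with these four edges deleted) has the property that a lies in a different connected component from each of b, c, d, then the edge ua is a cut vertex of the line graph L(G), i.e. L(G) minus the vertex ua is disconnected (assuming L(G) has at least 3 vertices). -/

import Mathlib

open SimpleGraph

/-- Let `u` be a vertex of degree 4 in a finite connected graph `G`, with neighbours
`a, b, c, d`, all of degree at least 2. If after deleting the four edges at `u` the
vertex `a` lies in a different component from each of `b, c, d`, then the vertex `ua`
is a cut vertex of the line graph. -/
theorem stmt_5 {V : Type*} [Fintype V] (G : SimpleGraph V) (hG : G.Connected)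
    (u a b c d : V)
    (hnbr : G.neighborSet u = {a, b, c, d})
    (hab : a ≠ b) (hac : a ≠ c) (had : a ≠ d) (hbc : b ≠ c) (hbd : b ≠ d) (hcd : c ≠ d)
    (hda : 2 ≤ (G.neighborSet a).ncard) (hdb : 2 ≤ (G.neighborSet b).ncard)
    (hdc : 2 ≤ (G.neighborSet c).ncard) (hdd : 2 ≤ (G.neighborSet d).ncard)
    (hsep : ∀ w ∈ ({b, c, d} : Set V),
      ¬ (G.deleteEdges {s(u, a), s(u, b), s(u, c), s(u, d)}).Reachable a w)
    (hcard : 3 ≤ Nat.card G.edgeSet) :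
    ¬ (G.lineGraph.induce {f : G.edgeSet | (f : Sym2 V) ≠ s(u, a)}).Connected := by
  intro hconn
  set S : Set (Sym2 V) := {s(u, a), s(u, b), s(u, c), s(u, d)} with hS
  set G' := G.deleteEdges S with hG'
  have hua : G.Adj u a := by
    have : a ∈ G.neighborSet u := by rw [hnbr]; simp
    exact this
  have hub : G.Adj u b := by
    have : b ∈ G.neighborSet u := by rw [hnbr]; simp
    exact this
  have hau_ne : a ≠ u := hua.ne'
  -- u is isolated in G'
  have hu_iso : ∀ y, ¬ G'.Adj u y := by
    intro y hy
    rw [hG', deleteEdges_adj] at hy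
    have : y ∈ G.neighborSet u := hy.1
    rw [hnbr] at this
    apply hy.2
    rcases this with h | h | h | h <;> subst h <;> simp [hS]
  have hru : ¬ G'.Reachable a u := by
    intro h
    obtain ⟨w⟩ := h.symm
    cases w with
    | nil => exact hau_ne rfl
    | cons h p => exact hu_iso _ h
  -- the invariant
  set P : Sym2 V → Prop := fun e => ∃ v ∈ e, G'.Reachable a v with hP
  have key : ∀ e f : G.edgeSet, (e : Sym2 V) ≠ s(u, a) → G.lineGraph.Adj e f →
      P e → P f := by
    rintro ⟨e, he⟩ ⟨f, hf⟩ hne hadj ⟨w, hwe, hw⟩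
    rw [lineGraph_adj_iff_exists] at hadj
    obtain ⟨-, v, hve, hvf⟩ := hadj
    -- e ∉ S
    have heS : e ∉ S := by
      intro hmem
      rcases hmem with h | h | h | h
      · exact hne h
      all_goals {
        subst h
        rcases Sym2.mem_iff.mp hwe with rfl | rfl
        · exact hru hw
        · exact hsep _ (by simp) hw }
    have he' : e ∈ G'.edgeSet := by
      rw [hG', edgeSet_deleteEdges]
      exact ⟨he, heS⟩
    -- v reachable from a
    have hv : G'.Reachable a v := by
      rcases eq_or_ne v w with rfl | hvw
      · exact hw
      · refine hw.trans (Adj.reachable ?_)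
        induction e using Sym2.ind with
        | _ p q =>
          rw [Sym2.mem_iff] at hwe hve
          rw [mem_edgeSet] at he'
          rcases hwe with rfl | rfl <;> rcases hve with rfl | rfl
          · exact absurd rfl hvw
          · exact he'
          · exact he'.symm
          · exact absurd rfl hvw
    exact ⟨v, hvf, hv⟩
  -- pick an edge at a not to u
  have hx : ∃ x, G.Adj a x ∧ x ≠ u := by
    by_contra hcon
    push_neg at hcon
    have hsub : G.neighborSet a ⊆ {u} := by
      intro x hxm; exact hcon x hxm
    have := Set.ncard_le_ncard hsub (Set.finite_singleton u)
    rw [Set.ncard_singleton] at this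
    omega
  obtain ⟨x, hax, hxu⟩ := hx
  have he0 : s(a, x) ∈ G.edgeSet := hax
  have he1 : s(u, b) ∈ G.edgeSet := hub
  have hne0 : s(a, x) ≠ s(u, a) := by
    intro h
    rw [Sym2.eq_iff] at h
    rcases h with ⟨h1, h2⟩ | ⟨h1, h2⟩
    · exact hau_ne h1
    · exact hxu h2
  have hne1 : s(u, b) ≠ s(u, a) := by
    intro h
    rw [Sym2.eq_iff] at h
    rcases h with ⟨h1, h2⟩ | ⟨h1, h2⟩
    · exact hab h2.symm
    · exact hau_ne h1.symm
  set T : Set G.edgeSet := {f : G.edgeSet | (f : Sym2 V) ≠ s(u, a)} with hT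
  have hm0 : (⟨s(a,x), he0⟩ : G.edgeSet) ∈ T := hne0
  have hm1 : (⟨s(u,b), he1⟩ : G.edgeSet) ∈ T := hne1
  have hr := hconn.preconnected ⟨⟨s(a,x), he0⟩, hm0⟩ ⟨⟨s(u,b), he1⟩, hm1⟩
  -- propagate P along the walk
  have prop : ∀ {y z : T} (_ : (G.lineGraph.induce T).Walk y z),
      P (y : G.edgeSet) → P (z : G.edgeSet) := by
    intro y z w
    induction w with
    | nil => exact id
    | @cons p q r h w ih =>
      intro hp
      exact ih (key _ _ p.2 h hp)
  have hP0 : P (s(a, x)) := ⟨a, by simp, Reachable.refl a⟩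
  have hP1 := prop hr.some hP0
  obtain ⟨v, hv, hrv⟩ := hP1
  rcases Sym2.mem_iff.mp hv with rfl | rfl
  · exact hru hrv
  · exact hsep _ (by simp) hrv
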